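/- arXiv:1405.4147 — 3 statements merged into one kernel-verified Lean document; each statement's English description precedes it below -/
import Mathlib

section
/- Let $(X, C, u)$ be an order unit space with a strictly positive state $\varphi$, and let $\Sigma_\varphi = \{x \in C^\circ : \varphi(x) = 1\}$. Then for all distinct $x, y \in \Sigma_\varphi$, Birkhoff's version of Hilbert's metric $d_H(x, y) = \log(M(x/y) M(y/x))$ equals the cross-ratio metric $\delta_H(x, y) = \log [x', x, y, y']$, where $x', y'$ are the endpoints of the open segment $\ell_{xy} \cap \Sigma_\varphi$ with $x$ between $x'$ and $y$ and $y$ between $y'$ and $x$, and $[x', x, y, y'] = \frac{|x'-y|}{|x'-x|} \cdot \frac{|y'-x|}{|y'-y|}$. Moreover, the topology induced by $d_H$ on $\Sigma_\varphi$ coincides with the topology induced by the order unit norm $\|\cdot\|_u$. -/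
namespace HilbertGeom

/-- An order unit space: a real vector space with an Archimedean cone `C` and order unit `u`. -/
structure OrderUnitSpace (X : Type*) [AddCommGroup X] [Module ℝ X] where
  C : Set X
  u : X
  convex : Convex ℝ C
  smul_mem : ∀ ⦃c : ℝ⦄, 0 ≤ c → ∀ ⦃x : X⦄, x ∈ C → c • x ∈ C
  salient : ∀ ⦃x : X⦄, x ∈ C → -x ∈ C → x = 0
  archimedean : ∀ x y : X, y ∈ C → (∀ n : ℕ, 0 < n → y - (n : ℝ) • x ∈ C) → -x ∈ C
  u_mem : u ∈ C
  orderUnit : ∀ x : X, ∃ c : ℝ, 0 < c ∧ c • u - x ∈ C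

namespace OrderUnitSpace

variable {X : Type*} [AddCommGroup X] [Module ℝ X] (S : OrderUnitSpace X)

/-- The order unit norm `‖x‖_u = inf {c > 0 : -c•u ≤ x ≤ c•u}`. -/
noncomputable def onorm (x : X) : ℝ :=
  sInf {c : ℝ | 0 < c ∧ c • S.u - x ∈ S.C ∧ c • S.u + x ∈ S.C}

/-- The interior of the cone `C` with respect to the order unit norm. -/
def interiorC : Set X :=
  {x : X | ∃ ε > 0, ∀ y : X, S.onorm (y - x) < ε → y ∈ S.C}

/-- `M(x/y) = inf {β > 0 : x ≤_C β y}`. -/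
noncomputable def M (x y : X) : ℝ := sInf {c : ℝ | 0 < c ∧ c • y - x ∈ S.C}

/-- Birkhoff's version of Hilbert's metric. -/
noncomputable def dH (x y : X) : ℝ := Real.log (S.M x y * S.M y x)

/-- `φ` is a state: a linear functional with `φ u = 1`. -/
def IsState (φ : X →ₗ[ℝ] ℝ) : Prop := φ S.u = 1

/-- `φ` is strictly positive: `φ(C \ {0}) ⊆ (0, ∞)`. -/
def StrictlyPos (φ : X →ₗ[ℝ] ℝ) : Prop := ∀ x ∈ S.C, x ≠ 0 → 0 < φ x

/-- The cross section `Σ_φ = {x ∈ C° : φ x = 1}`. -/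
def Sig (φ : X →ₗ[ℝ] ℝ) : Set X := {x | x ∈ S.interiorC ∧ φ x = 1}

/-- `z` lies in the closure of `A` with respect to the order unit norm. -/
def InClosure (A : Set X) (z : X) : Prop := ∀ ε > 0, ∃ w ∈ A, S.onorm (w - z) < ε

/-- The relative boundary of `Σ_φ` (in the affine hyperplane `φ = 1`, w.r.t. the order
unit norm): since `Σ_φ` is relatively open this is its closure minus itself. -/
def relBoundary (φ : X →ₗ[ℝ] ℝ) : Set X :=
  {z : X | S.InClosure (S.Sig φ) z ∧ z ∉ S.Sig φ}

/-- The straight line through `x` and `y`. -/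
def lineThrough (x y : X) : Set X := {z : X | ∃ t : ℝ, z = x + t • (y - x)}

end OrderUnitSpace

end HilbertGeom

namespace HilbertGeom

open OrderUnitSpace

section Lemmas

open Pointwise

namespace OrderUnitSpace

variable {X : Type*} [AddCommGroup X] [Module ℝ X] (S : OrderUnitSpace X)

lemma zero_mem : (0 : X) ∈ S.C := by
  simpa using S.smul_mem (le_refl (0 : ℝ)) S.u_mem

lemma add_mem {a b : X} (ha : a ∈ S.C) (hb : b ∈ S.C) : a + b ∈ S.C := by
  have h := S.convex ha hb (by norm_num : (0:ℝ) ≤ 1/2) (by norm_num : (0:ℝ) ≤ 1/2)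
    (by norm_num)
  have h2 := S.smul_mem (by norm_num : (0:ℝ) ≤ 2) h
  have e : (2:ℝ) • ((1/2 : ℝ) • a + (1/2 : ℝ) • b) = a + b := by
    rw [smul_add, smul_smul, smul_smul]; norm_num
  rwa [e] at h2

lemma smul_mem_of_pos {a : ℝ} (ha : 0 < a) {x : X} : a • x ∈ S.C ↔ x ∈ S.C := by
  constructor
  · intro h
    have h2 := S.smul_mem (le_of_lt (inv_pos.2 ha)) h
    rwa [smul_smul, inv_mul_cancel₀ ha.ne', one_smul] at h2
  · exact fun h => S.smul_mem ha.le h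

/-- The defining set of the order unit norm. -/
def nset (x : X) : Set ℝ := {c : ℝ | 0 < c ∧ c • S.u - x ∈ S.C ∧ c • S.u + x ∈ S.C}

lemma onorm_def (x : X) : S.onorm x = sInf (S.nset x) := rfl

lemma nset_nonempty (x : X) : (S.nset x).Nonempty := by
  obtain ⟨c1, hc1, h1⟩ := S.orderUnit x
  obtain ⟨c2, hc2, h2⟩ := S.orderUnit (-x)
  refine ⟨c1 + c2, by positivity, ?_, ?_⟩
  · have e : (c1 + c2) • S.u - x = (c1 • S.u - x) + c2 • S.u := by module
    rw [e]; exact S.add_mem h1 (S.smul_mem hc2.le S.u_mem)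
  · have e : (c1 + c2) • S.u + x = (c2 • S.u - (-x)) + c1 • S.u := by module
    rw [e]; exact S.add_mem h2 (S.smul_mem hc1.le S.u_mem)

lemma nset_bddBelow (x : X) : BddBelow (S.nset x) := ⟨0, fun _ hc => hc.1.le⟩

lemma onorm_nonneg (x : X) : 0 ≤ S.onorm x :=
  Real.sInf_nonneg fun _ hc => hc.1.le

lemma onorm_le {x : X} {c : ℝ} (hc : c ∈ S.nset x) : S.onorm x ≤ c :=
  csInf_le (S.nset_bddBelow x) hc

lemma onorm_zero : S.onorm (0 : X) = 0 := by
  have h : S.nset (0 : X) = Set.Ioi 0 := by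
    ext c
    constructor
    · exact fun h => h.1
    · intro (h : (0:ℝ) < c)
      exact ⟨h, by simpa using S.smul_mem h.le S.u_mem,
        by simpa using S.smul_mem h.le S.u_mem⟩
  rw [onorm_def, h, csInf_Ioi]

lemma nset_neg (x : X) : S.nset (-x) = S.nset x := by
  ext c
  have e1 : c • S.u - -x = c • S.u + x := by abel
  have e2 : c • S.u + -x = c • S.u - x := by abel
  simp only [nset, Set.mem_setOf_eq, e1, e2]
  tauto

lemma onorm_neg (x : X) : S.onorm (-x) = S.onorm x := by
  rw [onorm_def, onorm_def, nset_neg]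

lemma nset_smul {a : ℝ} (ha : 0 < a) (x : X) : S.nset (a • x) = a • S.nset x := by
  ext c
  rw [Set.mem_smul_set_iff_inv_smul_mem₀ ha.ne', smul_eq_mul]
  have key : ∀ y : X, (a⁻¹ * c) • S.u - y ∈ S.C ↔ c • S.u - a • y ∈ S.C := by
    intro y
    rw [← S.smul_mem_of_pos ha (x := (a⁻¹ * c) • S.u - y)]
    have e : a • ((a⁻¹ * c) • S.u - y) = c • S.u - a • y := by
      rw [smul_sub, smul_smul, mul_inv_cancel_left₀ ha.ne']
    rw [e]
  have key2 : ∀ y : X, (a⁻¹ * c) • S.u + y ∈ S.C ↔ c • S.u + a • y ∈ S.C := by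
    intro y
    rw [← S.smul_mem_of_pos ha (x := (a⁻¹ * c) • S.u + y)]
    have e : a • ((a⁻¹ * c) • S.u + y) = c • S.u + a • y := by
      rw [smul_add, smul_smul, mul_inv_cancel_left₀ ha.ne']
    rw [e]
  constructor
  · rintro ⟨h1, h2, h3⟩
    exact ⟨by positivity, (key x).2 h2, (key2 x).2 h3⟩
  · rintro ⟨h1, h2, h3⟩
    have hc : 0 < c := by
      have h := mul_pos ha h1
      rwa [mul_inv_cancel_left₀ ha.ne'] at h
    exact ⟨hc, (key x).1 h2, (key2 x).1 h3⟩

lemma onorm_smul (a : ℝ) (x : X) : S.onorm (a • x) = |a| * S.onorm x := by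
  rcases lt_trichotomy a 0 with h | h | h
  · have e : a • x = (-a) • (-x) := by rw [neg_smul, smul_neg, neg_neg]
    rw [e, onorm_def, S.nset_smul (by linarith), nset_neg,
      Real.sInf_smul_of_nonneg (by linarith), abs_of_neg h, smul_eq_mul, onorm_def]
  · subst h; simp [S.onorm_zero]
  · rw [onorm_def, S.nset_smul h, Real.sInf_smul_of_nonneg h.le, abs_of_pos h,
      smul_eq_mul, onorm_def]

lemma eq_zero_of_onorm_eq_zero {x : X} (h : S.onorm x = 0) : x = 0 := by
  have hstep : ∀ n : ℕ, 0 < n →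
      (S.u - (n:ℝ) • x ∈ S.C ∧ S.u - (n:ℝ) • (-x) ∈ S.C) := by
    intro n hn
    have hn' : (0:ℝ) < n := by exact_mod_cast hn
    have hlt : S.onorm x < 1 / n := by rw [h]; positivity
    obtain ⟨c, hc, hcn⟩ := exists_lt_of_csInf_lt (S.nset_nonempty x) hlt
    have hnc : 0 ≤ 1 - (n:ℝ) * c := by
      rw [lt_div_iff₀ hn'] at hcn; nlinarith [hc.1]
    have h1 : (1 - (n:ℝ) * c) • S.u ∈ S.C := S.smul_mem hnc S.u_mem
    constructor
    · have e : S.u - (n:ℝ) • x = (1 - (n:ℝ) * c) • S.u + (n:ℝ) • (c • S.u - x) := by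
        module
      rw [e]; exact S.add_mem h1 (S.smul_mem hn'.le hc.2.1)
    · have e : S.u - (n:ℝ) • (-x) = (1 - (n:ℝ) * c) • S.u + (n:ℝ) • (c • S.u + x) := by
        module
      rw [e]; exact S.add_mem h1 (S.smul_mem hn'.le hc.2.2)
  have h1 : -x ∈ S.C := S.archimedean x S.u S.u_mem fun n hn => (hstep n hn).1
  have h2 : -(-x) ∈ S.C := S.archimedean (-x) S.u S.u_mem fun n hn => (hstep n hn).2
  exact S.salient (by simpa using h2) h1

lemma onorm_pos {x : X} (hx : x ≠ 0) : 0 < S.onorm x :=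
  lt_of_le_of_ne (S.onorm_nonneg x) fun h => hx (S.eq_zero_of_onorm_eq_zero h.symm)

lemma interiorC_subset : S.interiorC ⊆ S.C := by
  rintro x ⟨ε, hε, h⟩
  apply h x
  rw [sub_self, S.onorm_zero]; exact hε

lemma segment_mem_interiorC {z p : X} (hz : z ∈ S.interiorC) (hp : p ∈ S.C)
    {l : ℝ} (h0 : 0 ≤ l) (h1 : l < 1) : (1 - l) • z + l • p ∈ S.interiorC := by
  obtain ⟨ε, hε, h⟩ := hz
  have hl : (0:ℝ) < 1 - l := by linarith
  refine ⟨(1 - l) * ε, by positivity, fun y hy => ?_⟩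
  set e := y - ((1 - l) • z + l • p) with he
  have hz' : z + (1 - l)⁻¹ • e ∈ S.C := by
    apply h
    have e2 : z + (1 - l)⁻¹ • e - z = (1 - l)⁻¹ • e := by abel
    rw [e2, S.onorm_smul, abs_of_pos (inv_pos.2 hl), inv_mul_lt_iff₀ hl]
    exact hy
  have hy' : y = (1 - l) • (z + (1 - l)⁻¹ • e) + l • p := by
    rw [smul_add, smul_smul, mul_inv_cancel₀ hl.ne', one_smul, he]
    abel
  rw [hy']
  exact S.add_mem (S.smul_mem hl.le hz') (S.smul_mem h0 hp)

lemma smul_cancel {p : ℝ} (hp : p ≠ 0) {A B : X} (h : p • A = p • B) : A = B := by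
  have h2 := congrArg (fun w => p⁻¹ • w) h
  simpa [smul_smul, inv_mul_cancel₀ hp] using h2

lemma scalar_eq_zero {c : ℝ} {v : X} (hv : v ≠ 0) (h : c • v = 0) : c = 0 := by
  by_contra hc
  apply hv
  have h2 := congrArg (fun w => c⁻¹ • w) h
  simpa [smul_smul, inv_mul_cancel₀ hc] using h2

lemma Mset_bddBelow (x y : X) : BddBelow {c : ℝ | 0 < c ∧ c • y - x ∈ S.C} :=
  ⟨0, fun _ hc => hc.1.le⟩

lemma M_def (x y : X) : S.M x y = sInf {c : ℝ | 0 < c ∧ c • y - x ∈ S.C} := rfl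

lemma M_le {x y : X} {c : ℝ} (h : 0 < c) (h2 : c • y - x ∈ S.C) : S.M x y ≤ c :=
  csInf_le (S.Mset_bddBelow x y) ⟨h, h2⟩

lemma M_nonneg (x y : X) : 0 ≤ S.M x y :=
  Real.sInf_nonneg fun _ hc => hc.1.le

lemma Mset_nonempty {y : X} (hy : y ∈ S.interiorC) (x : X) :
    ∃ c : ℝ, 0 < c ∧ c • y - x ∈ S.C := by
  obtain ⟨ε, hε, h⟩ := hy
  obtain ⟨c0, hc0, h0⟩ := S.orderUnit x
  have hu : S.onorm S.u ≤ 1 :=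
    S.onorm_le ⟨one_pos, by rw [one_smul, sub_self]; exact S.zero_mem,
      by rw [one_smul]; exact S.add_mem S.u_mem S.u_mem⟩
  have hyu : y - (ε/2) • S.u ∈ S.C := by
    apply h
    have e : y - (ε/2) • S.u - y = (-(ε/2)) • S.u := by module
    rw [e, S.onorm_smul, abs_neg, abs_of_pos (by linarith)]
    nlinarith [S.onorm_nonneg S.u]
  set c := 2 * c0 / ε with hcdef
  have hcpos : 0 < c := by positivity
  have hce : c * (ε/2) = c0 := by
    rw [hcdef, div_mul_div_comm, div_eq_iff (by positivity)]; ring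
  refine ⟨c, hcpos, ?_⟩
  have e : c • y - x = c • (y - (ε/2) • S.u) + ((c * (ε/2)) • S.u - x) := by module
  rw [e, hce]
  exact S.add_mem (S.smul_mem hcpos.le hyu) h0

variable {φ : X →ₗ[ℝ] ℝ}

lemma one_le_of_mem_Mset (hpos : S.StrictlyPos φ) {x y : X}
    (hx : φ x = 1) (hy : φ y = 1) {c : ℝ} (h : c • y - x ∈ S.C) : 1 ≤ c := by
  by_contra hlt
  push_neg at hlt
  have hphi : φ (c • y - x) = c - 1 := by
    rw [map_sub, map_smul, smul_eq_mul, hx, hy]; ring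
  have hne : c • y - x ≠ 0 := fun h0 => by rw [h0, map_zero] at hphi; linarith
  have h2 := hpos _ h hne
  rw [hphi] at h2; linarith

lemma one_lt_of_mem_Mset (hpos : S.StrictlyPos φ) {x y : X}
    (hx : φ x = 1) (hy : φ y = 1) (hxy : x ≠ y) {c : ℝ} (h : c • y - x ∈ S.C) :
    1 < c := by
  rcases eq_or_lt_of_le (S.one_le_of_mem_Mset hpos hx hy h) with heq | hlt
  · exfalso
    rw [← heq, one_smul] at h
    have hne : y - x ≠ 0 := sub_ne_zero_of_ne (Ne.symm hxy)
    have h2 := hpos _ h hne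
    rw [map_sub, hx, hy] at h2; linarith
  · exact hlt

lemma one_le_M (hpos : S.StrictlyPos φ) {x y : X} (hx : φ x = 1) (hy : φ y = 1)
    (hyint : y ∈ S.interiorC) : 1 ≤ S.M x y := by
  obtain ⟨c, hc, h⟩ := S.Mset_nonempty hyint x
  exact le_csInf ⟨c, hc, h⟩ fun b hb => S.one_le_of_mem_Mset hpos hx hy hb.2

lemma lineThrough_comm (x y : X) : lineThrough x y = lineThrough y x := by
  ext z
  constructor
  · rintro ⟨t, rfl⟩; exact ⟨1 - t, by module⟩
  · rintro ⟨t, rfl⟩; exact ⟨1 - t, by module⟩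

end OrderUnitSpace

end Lemmas

namespace OrderUnitSpace

variable {X : Type*} [AddCommGroup X] [Module ℝ X] (S : OrderUnitSpace X)
variable {φ : X →ₗ[ℝ] ℝ}

lemma M_formula (hpos : S.StrictlyPos φ) {x y x' y' : X}
    (hx : x ∈ S.Sig φ) (hy : y ∈ S.Sig φ) (hxy : x ≠ y)
    (hline : lineThrough x y ∩ S.Sig φ = openSegment ℝ x' y')
    (hxseg : x ∈ openSegment ℝ x' y) (hyseg : y ∈ openSegment ℝ y' x) :
    S.M x y = S.onorm (y' - x) / S.onorm (y' - y) := by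
  have hv : y - x ≠ 0 := sub_ne_zero_of_ne (Ne.symm hxy)
  -- extract parameters for x' and y'
  obtain ⟨p, q, hp, hq, hpq, hxeq⟩ := hxseg
  obtain ⟨a, b, ha, hb, hab, hyeq⟩ := hyseg
  set s : ℝ := -(q/p) with hsdef
  set t : ℝ := a⁻¹ with htdef
  have hs_neg : s < 0 := by
    have hqp : 0 < q / p := by positivity
    rw [hsdef]; linarith
  have ht_gt : 1 < t := by
    have hat : a * a⁻¹ = 1 := mul_inv_cancel₀ ha.ne'
    have ha1 : a < 1 := by linarith
    rw [htdef]
    nlinarith [inv_pos.2 ha]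
  have hst : s < t := by linarith
  have hx' : x' = x + s • (y - x) := by
    apply smul_cancel hp.ne'
    have h1 : p • x' = x - q • y := by rw [← hxeq]; abel
    rw [h1, smul_add, smul_smul]
    have h2 : p * s = -q := by rw [hsdef]; field_simp
    rw [h2, show p = 1 - q from by linarith]
    module
  have hy' : y' = x + t • (y - x) := by
    apply smul_cancel ha.ne'
    have h1 : a • y' = y - b • x := by rw [← hyeq]; abel
    rw [h1, smul_add, smul_smul]
    have h2 : a * t = 1 := mul_inv_cancel₀ ha.ne'
    rw [h2, show a = 1 - b from by linarith]
    module
  -- membership characterization of the open segment on the line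
  have hmem : ∀ r : ℝ, s < r → r < t → x + r • (y - x) ∈ S.Sig φ := by
    intro r h1 h2
    have hts : (0:ℝ) < t - s := by linarith
    have hseg : x + r • (y - x) ∈ openSegment ℝ x' y' := by
      refine ⟨(t - r)/(t - s), (r - s)/(t - s), div_pos (by linarith) hts,
        div_pos (by linarith) hts, ?_, ?_⟩
      · field_simp; ring
      · rw [hx', hy']
        have e1 : (t - r)/(t - s) + (r - s)/(t - s) = 1 := by field_simp; ring
        have e2 : (t - r)/(t - s) * s + (r - s)/(t - s) * t = r := by
          field_simp; ring
        calc ((t - r)/(t - s)) • (x + s • (y - x)) + ((r - s)/(t - s)) • (x + t • (y - x))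
            = ((t - r)/(t - s) + (r - s)/(t - s)) • x
              + ((t - r)/(t - s) * s + (r - s)/(t - s) * t) • (y - x) := by module
          _ = x + r • (y - x) := by rw [e1, e2, one_smul]
    rw [← hline] at hseg
    exact hseg.2
  have hinj : ∀ r : ℝ, x + r • (y - x) ∈ S.Sig φ → s < r ∧ r < t := by
    intro r hr
    have hseg : x + r • (y - x) ∈ openSegment ℝ x' y' := by
      rw [← hline]; exact ⟨⟨r, rfl⟩, hr⟩
    obtain ⟨a1, b1, ha1, hb1, hab1, heq⟩ := hseg
    rw [hx', hy'] at heq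
    have key : (a1 * s + b1 * t) • (y - x) = r • (y - x) := by
      calc (a1 * s + b1 * t) • (y - x)
          = (a1 • (x + s • (y - x)) + b1 • (x + t • (y - x))) - (a1 + b1) • x := by module
        _ = (x + r • (y - x)) - (1:ℝ) • x := by rw [heq, hab1]
        _ = r • (y - x) := by module
    have hr_eq : a1 * s + b1 * t = r := by
      have h0 : (a1 * s + b1 * t - r) • (y - x) = 0 := by
        rw [sub_smul, key, sub_self]
      have := scalar_eq_zero hv h0
      linarith
    constructor
    · nlinarith [mul_pos hb1 (sub_pos.2 hst)]
    · nlinarith [mul_pos ha1 (sub_pos.2 hst)]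
  have hxint := hx.1
  have hphix := hx.2
  have hphiy := hy.2
  have ht1 : (0:ℝ) < t - 1 := by linarith
  -- lower bound for elements of the M-set
  have hMlb : ∀ c ∈ {c : ℝ | 0 < c ∧ c • y - x ∈ S.C}, t/(t-1) ≤ c := by
    rintro c ⟨hc, hcC⟩
    have hc1 : 1 < c := S.one_lt_of_mem_Mset hpos hphix hphiy hxy hcC
    have hc1' : (0:ℝ) < c - 1 := by linarith
    set r : ℝ := c/(c-1) with hrdef
    have hr1 : 1 < r := by rw [hrdef, lt_div_iff₀ hc1']; linarith
    have hp : x + r • (y - x) ∈ S.C := by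
      have hcr : (c - 1) * r = c := by rw [hrdef]; field_simp
      have e : (c - 1) • (x + r • (y - x)) = c • y - x := by
        calc (c - 1) • (x + r • (y - x))
            = (c - 1) • x + ((c - 1) * r) • (y - x) := by module
          _ = (c - 1) • x + c • (y - x) := by rw [hcr]
          _ = c • y - x := by module
      rw [← S.smul_mem_of_pos hc1', e]
      exact hcC
    have hrt : r ≤ t := by
      by_contra hgt
      push_neg at hgt
      set l : ℝ := (t + r)/(2*r) with hldef
      have hr0 : (0:ℝ) < r := by linarith
      have hl0 : 0 < l := by rw [hldef]; positivity
      have hl1 : l < 1 := by rw [hldef, div_lt_one (by linarith)]; linarith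
      have hseg := S.segment_mem_interiorC hxint hp hl0.le hl1
      have e : (1 - l) • x + l • (x + r • (y - x)) = x + (l * r) • (y - x) := by module
      rw [e] at hseg
      have hSig : x + (l * r) • (y - x) ∈ S.Sig φ := by
        refine ⟨hseg, ?_⟩
        rw [map_add, map_smul, map_sub, hphix, hphiy, smul_eq_mul]
        ring
      have hlr := (hinj _ hSig).2
      have hlr_eq : l * r = (t + r)/2 := by rw [hldef]; field_simp
      rw [hlr_eq] at hlr
      linarith
    rw [div_le_iff₀ ht1]
    rw [hrdef, div_le_iff₀ hc1'] at hrt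
    nlinarith
  -- upper bound: everything above t/(t-1) is in the M-set
  have hMub : ∀ c : ℝ, t/(t-1) < c → c • y - x ∈ S.C := by
    intro c hc
    have htt1 : 1 < t/(t-1) := by rw [lt_div_iff₀ ht1]; linarith
    have hc1 : 1 < c := lt_trans htt1 hc
    have hc1' : (0:ℝ) < c - 1 := by linarith
    set r : ℝ := c/(c-1) with hrdef
    have hr1 : 1 < r := by rw [hrdef, lt_div_iff₀ hc1']; linarith
    have hr_lt : r < t := by
      rw [hrdef, div_lt_iff₀ hc1']
      rw [div_lt_iff₀ ht1] at hc
      nlinarith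
    have hSig := hmem r (by linarith) hr_lt
    have hpC : x + r • (y - x) ∈ S.C := S.interiorC_subset hSig.1
    have hcr : (c - 1) * r = c := by rw [hrdef]; field_simp
    have e : (c - 1) • (x + r • (y - x)) = c • y - x := by
      calc (c - 1) • (x + r • (y - x))
          = (c - 1) • x + ((c - 1) * r) • (y - x) := by module
        _ = (c - 1) • x + c • (y - x) := by rw [hcr]
        _ = c • y - x := by module
    rw [← e]
    exact S.smul_mem hc1'.le hpC
  have hM : S.M x y = t/(t-1) := by
    apply le_antisymm
    · have hsub : Set.Ioi (t/(t-1)) ⊆ {c : ℝ | 0 < c ∧ c • y - x ∈ S.C} := by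
        intro c hc
        have htt1 : 1 < t/(t-1) := by rw [lt_div_iff₀ ht1]; linarith
        exact ⟨by have : t/(t-1) < c := hc; linarith, hMub c hc⟩
      calc S.M x y ≤ sInf (Set.Ioi (t/(t-1))) :=
            csInf_le_csInf (S.Mset_bddBelow x y) ⟨t/(t-1) + 1, by simp⟩ hsub
        _ = t/(t-1) := csInf_Ioi
    · refine le_csInf ⟨t/(t-1) + 1, ?_, hMub _ (by linarith)⟩ hMlb
      have htt1 : 1 < t/(t-1) := by rw [lt_div_iff₀ ht1]; linarith
      linarith
  have e1 : y' - x = t • (y - x) := by rw [hy']; module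
  have e2 : y' - y = (t - 1) • (y - x) := by rw [hy']; module
  rw [hM, e1, e2, S.onorm_smul, S.onorm_smul, abs_of_pos (by linarith),
    abs_of_pos ht1]
  have hn : S.onorm (y - x) ≠ 0 := (S.onorm_pos hv).ne'
  rw [mul_div_mul_right _ _ hn]

end OrderUnitSpace


/-- On `Σ_φ`, Birkhoff's version of Hilbert's metric
`d_H(x,y) = log (M(x/y) M(y/x))` coincides with the cross-ratio metric
`δ_H(x,y) = log [x', x, y, y']`, where `x', y'` are the endpoints of the open segment
`ℓ_{xy} ∩ Σ_φ` with `x` between `x'` and `y`, and `y` between `y'` and `x`.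
Moreover, the topology induced by `d_H` on `Σ_φ` coincides with the topology induced
by the order unit norm. -/
theorem hilbert_metric_eq_cross_ratio_and_topologies_coincide
    {X : Type*} [AddCommGroup X] [Module ℝ X] (S : OrderUnitSpace X)
    (φ : X →ₗ[ℝ] ℝ) (hstate : S.IsState φ) (hpos : S.StrictlyPos φ) :
    (∀ x ∈ S.Sig φ, ∀ y ∈ S.Sig φ, x ≠ y → ∀ x' y' : X,
      lineThrough x y ∩ S.Sig φ = openSegment ℝ x' y' →
      x ∈ openSegment ℝ x' y → y ∈ openSegment ℝ y' x →
      S.dH x y = Real.log ((S.onorm (x' - y) / S.onorm (x' - x)) *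
        (S.onorm (y' - x) / S.onorm (y' - y)))) ∧
    (∀ z ∈ S.Sig φ, ∀ ε > 0, ∃ δ > 0, ∀ w ∈ S.Sig φ,
      S.onorm (w - z) < δ → S.dH w z < ε) ∧
    (∀ z ∈ S.Sig φ, ∀ ε > 0, ∃ δ > 0, ∀ w ∈ S.Sig φ,
      S.dH w z < δ → S.onorm (w - z) < ε) := by
  refine ⟨?_, ?_, ?_⟩
  · -- Part 1: Hilbert metric equals cross-ratio metric
    intro x hx y hy hxy x' y' hline hxseg hyseg
    have h1 : S.M x y = S.onorm (y' - x) / S.onorm (y' - y) :=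
      S.M_formula hpos hx hy hxy hline hxseg hyseg
    have hline' : lineThrough y x ∩ S.Sig φ = openSegment ℝ y' x' := by
      rw [lineThrough_comm y x, hline, openSegment_symm]
    have h2 : S.M y x = S.onorm (x' - y) / S.onorm (x' - x) :=
      S.M_formula hpos hy hx (Ne.symm hxy) hline' hyseg hxseg
    show Real.log (S.M x y * S.M y x) = _
    rw [h1, h2]
    exact congrArg Real.log (mul_comm _ _)
  · -- Part 2: norm-small implies dH-small
    intro z hz ε hε
    obtain ⟨εz, hεz, hball⟩ := hz.1
    set η : ℝ := min 1 (ε/4) with hηdef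
    have hη : 0 < η := lt_min one_pos (by positivity)
    have hη1 : η ≤ 1 := min_le_left _ _
    have hη2 : η ≤ ε/4 := min_le_right _ _
    refine ⟨η * εz / 2, by positivity, fun w hw hwz => ?_⟩
    have h1 : (1 + η) • z - w ∈ S.C := by
      have hc : η * η⁻¹ = 1 := mul_inv_cancel₀ hη.ne'
      have e : (1 + η) • z - w = η • (z + η⁻¹ • (z - w)) := by
        calc (1 + η) • z - w = η • z + (1:ℝ) • (z - w) := by module
          _ = η • z + (η * η⁻¹) • (z - w) := by rw [hc]
          _ = η • (z + η⁻¹ • (z - w)) := by module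
      rw [e]
      apply S.smul_mem hη.le
      apply hball
      have e2 : z + η⁻¹ • (z - w) - z = η⁻¹ • (z - w) := by abel
      rw [e2, S.onorm_smul, abs_of_pos (inv_pos.2 hη), inv_mul_lt_iff₀ hη]
      have hzw : S.onorm (z - w) < η * εz / 2 := by
        have e3 : z - w = -(w - z) := by abel
        rw [e3, S.onorm_neg]
        exact hwz
      nlinarith
    have h2 : (1 + η) • w - z ∈ S.C := by
      have hc : η * ((1 + η)/η) = 1 + η := by field_simp
      have e : (1 + η) • w - z = η • (z + ((1 + η)/η) • (w - z)) := by
        calc (1 + η) • w - z = η • z + (1 + η) • (w - z) := by module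
          _ = η • z + (η * ((1 + η)/η)) • (w - z) := by rw [hc]
          _ = η • (z + ((1 + η)/η) • (w - z)) := by module
      rw [e]
      apply S.smul_mem hη.le
      apply hball
      have e2 : z + ((1 + η)/η) • (w - z) - z = ((1 + η)/η) • (w - z) := by abel
      rw [e2, S.onorm_smul, abs_of_pos (by positivity), div_mul_eq_mul_div,
        div_lt_iff₀ hη]
      nlinarith [S.onorm_nonneg (w - z)]
    have hM1 : S.M w z ≤ 1 + η := S.M_le (by positivity) h1
    have hM2 : S.M z w ≤ 1 + η := S.M_le (by positivity) h2
    have hprod : S.M w z * S.M z w ≤ (1 + η) * (1 + η) :=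
      mul_le_mul hM1 hM2 (S.M_nonneg z w) (by positivity)
    have hlog : S.dH w z ≤ Real.log ((1 + η) * (1 + η)) := by
      rcases lt_or_eq_of_le (mul_nonneg (S.M_nonneg w z) (S.M_nonneg z w)) with hp' | h0
      · exact Real.log_le_log hp' hprod
      · show Real.log (S.M w z * S.M z w) ≤ _
        rw [← h0, Real.log_zero]
        exact Real.log_nonneg (by nlinarith)
    have hfin : Real.log ((1 + η) * (1 + η)) < ε := by
      rw [Real.log_mul (by positivity) (by positivity)]
      have hlog1 : Real.log (1 + η) ≤ η := by
        have h := Real.log_le_sub_one_of_pos (show (0:ℝ) < 1 + η by positivity)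
        linarith
      linarith
    exact lt_of_le_of_lt hlog hfin
  · -- Part 3: dH-small implies norm-small
    intro z hz ε hε
    obtain ⟨cz, hcz, hczu⟩ := S.orderUnit z
    have hzC : z ∈ S.C := S.interiorC_subset hz.1
    set η : ℝ := min 1 (ε / (2 * cz + 2)) with hηdef
    have hη : 0 < η := lt_min one_pos (by positivity)
    have hη1 : η ≤ 1 := min_le_left _ _
    have hη2 : η ≤ ε / (2 * cz + 2) := min_le_right _ _
    refine ⟨Real.log (1 + η), Real.log_pos (by linarith), fun w hw hd => ?_⟩
    have hM1ge : 1 ≤ S.M w z := S.one_le_M hpos hw.2 hz.2 hz.1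
    have hM2ge : 1 ≤ S.M z w := S.one_le_M hpos hz.2 hw.2 hw.1
    have hprodpos : 0 < S.M w z * S.M z w := by nlinarith
    have hprodlt : S.M w z * S.M z w < 1 + η := by
      have hd' : Real.log (S.M w z * S.M z w) < Real.log (1 + η) := hd
      have h := Real.exp_lt_exp.2 hd'
      rwa [Real.exp_log hprodpos, Real.exp_log (by positivity)] at h
    have hMwz : S.M w z < 1 + η := by nlinarith
    have hMzw : S.M z w < 1 + η := by nlinarith
    obtain ⟨c1, hc1mem, hc1lt⟩ := exists_lt_of_csInf_lt
      (by obtain ⟨c, hc, h⟩ := S.Mset_nonempty hz.1 w; exact ⟨c, hc, h⟩ :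
        {c : ℝ | 0 < c ∧ c • z - w ∈ S.C}.Nonempty) hMwz
    obtain ⟨c2, hc2mem, hc2lt⟩ := exists_lt_of_csInf_lt
      (by obtain ⟨c, hc, h⟩ := S.Mset_nonempty hw.1 z; exact ⟨c, hc, h⟩ :
        {c : ℝ | 0 < c ∧ c • w - z ∈ S.C}.Nonempty) hMzw
    have h1 : (1 + η) • z - w ∈ S.C := by
      have e : (1 + η) • z - w = ((1 + η) - c1) • z + (c1 • z - w) := by module
      rw [e]
      exact S.add_mem (S.smul_mem (by linarith) hzC) hc1mem.2
    have hwC : w ∈ S.C := S.interiorC_subset hw.1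
    have h2 : (1 + η) • w - z ∈ S.C := by
      have e : (1 + η) • w - z = ((1 + η) - c2) • w + (c2 • w - z) := by module
      rw [e]
      exact S.add_mem (S.smul_mem (by linarith) hwC) hc2mem.2
    have hb1 : (η * (1 + η)) • z - (w - z) ∈ S.C := by
      have e : (η * (1 + η)) • z - (w - z) = ((1 + η) • z - w) + (η * η) • z := by
        module
      rw [e]
      exact S.add_mem h1 (S.smul_mem (by positivity) hzC)
    have hb2 : (η * (1 + η)) • z - (z - w) ∈ S.C := by
      have e : (η * (1 + η)) • z - (z - w) = η • ((1 + η) • z - w) + ((1 + η) • w - z) := by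
        module
      rw [e]
      exact S.add_mem (S.smul_mem hη.le h1) h2
    have hfin : S.onorm (w - z) ≤ η * (1 + η) * cz := by
      apply S.onorm_le
      refine ⟨by positivity, ?_, ?_⟩
      · have e : (η * (1 + η) * cz) • S.u - (w - z)
            = (η * (1 + η)) • (cz • S.u - z) + ((η * (1 + η)) • z - (w - z)) := by
          module
        rw [e]
        exact S.add_mem (S.smul_mem (by positivity) hczu) hb1
      · have e : (η * (1 + η) * cz) • S.u + (w - z)
            = (η * (1 + η)) • (cz • S.u - z) + ((η * (1 + η)) • z - (z - w)) := by
          module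
        rw [e]
        exact S.add_mem (S.smul_mem (by positivity) hczu) hb2
    have hkey : η * (2 * cz + 2) ≤ ε := by
      rw [le_div_iff₀ (by positivity)] at hη2
      exact hη2
    calc S.onorm (w - z) ≤ η * (1 + η) * cz := hfin
      _ ≤ 2 * η * cz := by
          nlinarith [mul_nonneg (mul_nonneg (sub_nonneg.2 hη1) hη.le) hcz.le]
      _ < ε := by nlinarith


end HilbertGeom
end

section
/- Let $K$ be a compact Hausdorff space, let $B$ be the unit ball of $\mathbb{R}\mathbf{1}^\perp = \{\mu \in M(K) : \mu(K) = 0\}$ with respect to the norm $\frac{1}{2}\|\cdot\|_{TV}$, and let $\mathrm{ext}(B) = \{\delta_s - \delta_t : s, t \in K,\ s \neq t\}$ be its set of extreme points. For $s \in K$, set $E_s = \{\delta_s - \delta_t : t \in K,\ t \neq s\}$. If $\emptyset \neq A \subseteq \mathrm{ext}(B)$ is such that $\frac{1}{2}\|\mu - \nu\|_{TV} = 1$ for all $\mu, \nu \in A$ with $\mu \neq \nu$, then there exists $s \in K$ such that $A \subseteq E_s$ or $A \subseteq -E_s$. -/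
namespace HilbertFn

open MeasureTheory

variable (K : Type*)

/-- The total variation norm `‖μ‖_TV = |μ|(K)` of a signed measure. -/
noncomputable def tv [MeasurableSpace K] (μ : SignedMeasure K) : ℝ :=
  (μ.totalVariation Set.univ).toReal

/-- The Dirac measure at `s`, as a signed measure. -/
noncomputable def diracSM [MeasurableSpace K] (s : K) : SignedMeasure K :=
  (Measure.dirac s).toSignedMeasure

/-- The unit ball of `ℝ𝟙^⊥ = {μ ∈ M(K) : μ(K) = 0}` with respect to the norm
`(1/2)‖·‖_TV`, inside the space `M(K)` of regular signed Borel measures. -/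
def ballB [TopologicalSpace K] [MeasurableSpace K] : Set (SignedMeasure K) :=
  {μ | Measure.Regular μ.totalVariation ∧ μ Set.univ = 0 ∧ tv K μ ≤ 2}

/-- Apply a signed measure via its Jordan decomposition. -/
lemma sm_apply_jordan [MeasurableSpace K] (μ : SignedMeasure K) {E : Set K}
    (hE : MeasurableSet E) :
    μ E = (μ.toJordanDecomposition.posPart E).toReal
        - (μ.toJordanDecomposition.negPart E).toReal := by
  conv_lhs => rw [← μ.toSignedMeasure_toJordanDecomposition]
  rw [JordanDecomposition.toSignedMeasure]
  rw [VectorMeasure.sub_apply, Measure.toSignedMeasure_apply_measurable hE,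
    Measure.toSignedMeasure_apply_measurable hE]
  rfl

/-- Lower bound for the total variation norm. -/
lemma le_tv [MeasurableSpace K] (μ : SignedMeasure K) {E : Set K}
    (hE : MeasurableSet E) : μ E - μ Eᶜ ≤ tv K μ := by
  have h1 := sm_apply_jordan K μ hE
  have h2 := sm_apply_jordan K μ hE.compl
  set p := μ.toJordanDecomposition.posPart
  set n := μ.toJordanDecomposition.negPart
  have htv : tv K μ = (p Set.univ).toReal + (n Set.univ).toReal := by
    rw [tv, SignedMeasure.totalVariation, Measure.add_apply,
      ENNReal.toReal_add (measure_ne_top _ _) (measure_ne_top _ _)]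
  have hpE : (p E).toReal ≤ (p Set.univ).toReal :=
    ENNReal.toReal_mono (measure_ne_top _ _) (measure_mono (Set.subset_univ _))
  have hnE : (n Eᶜ).toReal ≤ (n Set.univ).toReal :=
    ENNReal.toReal_mono (measure_ne_top _ _) (measure_mono (Set.subset_univ _))
  have h3 : (0:ℝ) ≤ (n E).toReal := ENNReal.toReal_nonneg
  have h4 : (0:ℝ) ≤ (p Eᶜ).toReal := ENNReal.toReal_nonneg
  rw [h1, h2, htv]
  linarith

lemma diracSM_apply_of_mem [MeasurableSpace K] {s : K} {E : Set K} (hE : MeasurableSet E)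
    (h : s ∈ E) : diracSM K s E = 1 := by
  rw [diracSM, Measure.toSignedMeasure_apply_measurable hE, Measure.real, Measure.dirac_apply_of_mem h,
    ENNReal.toReal_one]

lemma diracSM_apply_of_not_mem [MeasurableSpace K] {s : K} {E : Set K} (hE : MeasurableSet E)
    (h : s ∉ E) : diracSM K s E = 0 := by
  rw [diracSM, Measure.toSignedMeasure_apply_measurable hE, Measure.real, Measure.dirac_apply' _ hE,
    Set.indicator_of_notMem h, ENNReal.toReal_zero]

/-- Key lemma: if the first and second coordinates both differ, the TV distance
    would be 4, which is impossible. -/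
lemma pair_shares [TopologicalSpace K] [T2Space K] [MeasurableSpace K] [BorelSpace K]
    {A : Set (SignedMeasure K)}
    (hequi : ∀ μ ∈ A, ∀ ν ∈ A, μ ≠ ν → tv K (μ - ν) = 2)
    {μ ν : SignedMeasure K} (hμ : μ ∈ A) (hν : ν ∈ A)
    {s t u v : K} (hst : s ≠ t) (huv : u ≠ v)
    (hμe : μ = diracSM K s - diracSM K t) (hνe : ν = diracSM K u - diracSM K v) :
    s = u ∨ t = v := by
  by_contra hc
  push_neg at hc
  obtain ⟨hsu, htv⟩ := hc
  have hsmeas : MeasurableSet ({s} : Set K) := measurableSet_singleton s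
  -- first, μ ≠ ν
  have hne : μ ≠ ν := by
    intro h
    have h0 := congrArg (fun ρ : SignedMeasure K => ρ {s}) h
    simp only [hμe, hνe, VectorMeasure.sub_apply] at h0
    rw [diracSM_apply_of_mem K hsmeas rfl,
      diracSM_apply_of_not_mem K hsmeas (fun h' => hst (Set.mem_singleton_iff.mp h').symm),
      diracSM_apply_of_not_mem K hsmeas (fun h' => hsu (Set.mem_singleton_iff.mp h').symm)]
      at h0
    have hd : diracSM K v {s} = 1 ∨ diracSM K v {s} = 0 := by
      by_cases hv : v ∈ ({s} : Set K)
      · exact Or.inl (diracSM_apply_of_mem K hsmeas hv)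
      · exact Or.inr (diracSM_apply_of_not_mem K hsmeas hv)
    rcases hd with hd | hd <;> rw [hd] at h0 <;> linarith
  have h2 := hequi μ hμ ν hν hne
  -- evaluate on E = {s, v}
  set E : Set K := insert s {v} with hEdef
  have hE : MeasurableSet E := (measurableSet_singleton v).insert s
  have hEval : ∀ x : K, x ∈ E ↔ (x = s ∨ x = v) := by intro x; simp [hEdef]
  have htE : t ∉ E := by
    intro h'
    rcases (hEval t).mp h' with h' | h'
    · exact hst h'.symm
    · exact htv h'
  have huE : u ∉ E := by
    intro h'
    rcases (hEval u).mp h' with h' | h'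
    · exact hsu h'.symm
    · exact huv h'
  have hμνE : (μ - ν) E = 2 := by
    rw [VectorMeasure.sub_apply, hμe, hνe, VectorMeasure.sub_apply, VectorMeasure.sub_apply]
    rw [diracSM_apply_of_mem K hE ((hEval s).mpr (Or.inl rfl)),
      diracSM_apply_of_mem K hE ((hEval v).mpr (Or.inr rfl)),
      diracSM_apply_of_not_mem K hE htE, diracSM_apply_of_not_mem K hE huE]
    ring
  have hμνEc : (μ - ν) Eᶜ = -2 := by
    have huniv : (μ - ν) Set.univ = 0 := by
      rw [VectorMeasure.sub_apply, hμe, hνe, VectorMeasure.sub_apply, VectorMeasure.sub_apply,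
        diracSM_apply_of_mem K MeasurableSet.univ (Set.mem_univ s),
        diracSM_apply_of_mem K MeasurableSet.univ (Set.mem_univ t),
        diracSM_apply_of_mem K MeasurableSet.univ (Set.mem_univ u),
        diracSM_apply_of_mem K MeasurableSet.univ (Set.mem_univ v)]
      ring
    have hadd := VectorMeasure.of_add_of_diff (v := μ - ν) hE MeasurableSet.univ
      (Set.subset_univ E)
    rw [huniv] at hadd
    have hdiff : Set.univ \ E = Eᶜ := by simp [Set.compl_eq_univ_diff]
    rw [hdiff, hμνE] at hadd
    linarith
  have hle := le_tv K (μ - ν) hE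
  rw [hμνE, hμνEc, h2] at hle
  linarith

/-- If `A` is a nonempty subset of the set
`ext(B) = {δ_s - δ_t : s ≠ t}` of extreme points of the unit ball `B` of
`(ℝ𝟙^⊥, (1/2)‖·‖_TV)` such that `(1/2)‖μ - ν‖_TV = 1` for all distinct `μ, ν ∈ A`,
then there exists `s ∈ K` with `A ⊆ E_s` or `A ⊆ -E_s`, where
`E_s = {δ_s - δ_t : t ≠ s}`. -/
theorem equilateral_subset_of_extreme_points
    [TopologicalSpace K] [CompactSpace K] [T2Space K] [MeasurableSpace K] [BorelSpace K]
    (A : Set (SignedMeasure K)) (hA : A.Nonempty)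
    (hext : A ⊆ {μ : SignedMeasure K | ∃ s t : K, s ≠ t ∧ μ = diracSM K s - diracSM K t})
    (hequi : ∀ μ ∈ A, ∀ ν ∈ A, μ ≠ ν → tv K (μ - ν) = 2) :
    ∃ s : K,
      A ⊆ {μ : SignedMeasure K | ∃ t : K, t ≠ s ∧ μ = diracSM K s - diracSM K t} ∨
      A ⊆ {μ : SignedMeasure K | ∃ t : K, t ≠ s ∧ μ = diracSM K t - diracSM K s} := by
  obtain ⟨μ₀, hμ₀⟩ := hA
  obtain ⟨s₀, t₀, hst₀, hμ₀e⟩ := hext hμ₀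
  by_cases h : ∀ μ ∈ A, ∃ t : K, t ≠ s₀ ∧ μ = diracSM K s₀ - diracSM K t
  · exact ⟨s₀, Or.inl fun μ hμ => h μ hμ⟩
  · push_neg at h
    obtain ⟨μ₁, hμ₁, hμ₁n⟩ := h
    obtain ⟨u, v, huv, hμ₁e⟩ := hext hμ₁
    have hvt₀ : t₀ = v := by
      rcases pair_shares K hequi hμ₀ hμ₁ hst₀ huv hμ₀e hμ₁e with h' | h'
      · exact absurd (by rw [h']; exact hμ₁e)
          (hμ₁n v (fun hh => huv (h'.symm.trans hh.symm)))
      · exact h'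
    have hus₀ : u ≠ s₀ := by
      intro h'
      exact hμ₁n v (fun hh => huv (h'.trans hh.symm)) (by rw [← h']; exact hμ₁e)
    refine ⟨t₀, Or.inr fun μ hμ => ?_⟩
    obtain ⟨a, b, hab, hμe⟩ := hext hμ
    have h1 := pair_shares K hequi hμ hμ₀ hab hst₀ hμe hμ₀e
    have h2 := pair_shares K hequi hμ hμ₁ hab huv hμe hμ₁e
    have hbt₀ : b = t₀ := by
      rcases h1 with h1 | h1
      · rcases h2 with h2 | h2
        · exact absurd (h1.symm.trans h2) hus₀.symm
        · exact h2.trans hvt₀.symm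
      · exact h1
    exact ⟨a, hbt₀ ▸ hab, by rw [hμe, hbt₀]⟩

end HilbertFn
end

section
/- Let $K_1, K_2$ be compact Hausdorff spaces and let $T : C(K_1)/\mathbb{R}\mathbf{1} \to C(K_2)/\mathbb{R}\mathbf{1}$ be a surjective linear isometry with respect to the variation norms. If $\theta : K_2 \to K_1$ is a bijection and $\varepsilon \in \{-1, 1\}$ are such that the adjoint $T^*$ satisfies $T^*(\delta_s - \delta_t) = \varepsilon(\delta_{\theta(s)} - \delta_{\theta(t)})$ for all distinct $s, t \in K_2$, then $\theta$ is a homeomorphism. -/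
namespace HilbertFn

variable (K : Type*) [TopologicalSpace K] [CompactSpace K] [T2Space K]

/-- The variation seminorm of `f ∈ C(K, ℝ)`: `sup f - inf f`. -/
noncomputable def var (f : C(K, ℝ)) : ℝ := (⨆ x, f x) - ⨅ x, f x

/-- The subspace `ℝ𝟙` of constant functions. -/
abbrev one1 : Submodule ℝ C(K, ℝ) := Submodule.span ℝ {(1 : C(K, ℝ))}

/-- The quotient space `C(K)/ℝ𝟙`. -/
abbrev Cbar := C(K, ℝ) ⧸ one1 K

/-- The variation norm on the quotient `C(K)/ℝ𝟙`; since `var` is constant on each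
equivalence class, this is the common value of `var` on the class. -/
noncomputable def varQ (x : Cbar K) : ℝ :=
  sInf (var K '' {f : C(K, ℝ) | Submodule.Quotient.mk f = x})

/-- Strictly positive continuous functions on `K`. -/
def PosC : Type _ := {f : C(K, ℝ) // ∀ x, 0 < f x}

/-- Two strictly positive functions lie on the same ray iff they are positive scalar
multiples of each other. -/
def rayRel (f g : PosC K) : Prop := ∃ c : ℝ, 0 < c ∧ g.1 = c • f.1

/-- The projective space of rays of strictly positive continuous functions. -/
def PRay : Type _ := Quot (rayRel K)

/-- Hilbert's metric on representatives. -/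
noncomputable def dHf (f g : PosC K) : ℝ :=
  Real.log ((⨆ x, f.1 x / g.1 x) * (⨆ x, g.1 x / f.1 x))

/-- Hilbert's metric on the ray space `P(C(K)₊°)`; since `dHf` is constant on rays this
is the common value on the pair of classes. -/
noncomputable def dH (F G : PRay K) : ℝ :=
  sInf {d : ℝ | ∃ f g : PosC K,
    Quot.mk (rayRel K) f = F ∧ Quot.mk (rayRel K) g = G ∧ dHf K f g = d}

/-- The pointwise logarithm of a strictly positive continuous function. -/
noncomputable def logC (f : PosC K) : C(K, ℝ) :=
  ⟨fun x => Real.log (f.1 x), (map_continuous f.1).log fun x => (f.2 x).ne'⟩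

end HilbertFn

namespace HilbertFn

/-- Let `T : C(K₁)/ℝ𝟙 → C(K₂)/ℝ𝟙` be a surjective linear isometry
for the variation norms. If `θ : K₂ → K₁` is a bijection and `ε ∈ {-1, 1}` are such
that the adjoint satisfies `T*(δ_s - δ_t) = ε (δ_{θ s} - δ_{θ t})` for all `s, t ∈ K₂`
(equivalently, every representative `g` of `T f̄` satisfies
`g s - g t = ε (f (θ s) - f (θ t))`), then `θ` is a homeomorphism. -/
theorem bijection_from_adjoint_is_homeomorphism
    {K₁ : Type*} [TopologicalSpace K₁] [CompactSpace K₁] [T2Space K₁]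
    {K₂ : Type*} [TopologicalSpace K₂] [CompactSpace K₂] [T2Space K₂]
    (T : Cbar K₁ →ₗ[ℝ] Cbar K₂) (hsurj : Function.Surjective T)
    (hiso : ∀ x : Cbar K₁, varQ K₂ (T x) = varQ K₁ x)
    (θ : K₂ → K₁) (hbij : Function.Bijective θ)
    (ε : ℝ) (hε : ε = 1 ∨ ε = -1)
    (hadj : ∀ f : C(K₁, ℝ), ∀ g : C(K₂, ℝ),
      Submodule.Quotient.mk g = T (Submodule.Quotient.mk f) →
      ∀ s t : K₂, g s - g t = ε * (f (θ s) - f (θ t))) :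
    IsHomeomorph θ := by
  rw [isHomeomorph_iff_continuous_bijective]
  refine ⟨?_, hbij⟩
  rcases isEmpty_or_nonempty K₂ with hK | hK
  · exact continuous_def.2 fun u _ => by simp [Set.eq_empty_of_isEmpty]
  have hε0 : ε ≠ 0 := by rcases hε with h | h <;> simp [h]
  -- every `f ∘ θ` is continuous
  have key : ∀ f : C(K₁, ℝ), Continuous fun s => f (θ s) := by
    intro f
    obtain ⟨g, hg⟩ := Submodule.Quotient.mk_surjective _ (T (Submodule.Quotient.mk f))
    have h := hadj f g hg
    obtain ⟨t₀⟩ := hK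
    have : (fun s => f (θ s)) = fun s => ε⁻¹ * (g s - g t₀) + f (θ t₀) := by
      funext s
      have := h s t₀
      field_simp
      linarith
    rw [this]
    fun_prop
  -- deduce continuity of θ using Urysohn's lemma
  rw [continuous_def]
  intro U hU
  rw [isOpen_iff_forall_mem_open]
  intro s hs
  obtain ⟨f, hf0, hf1, -⟩ := exists_continuous_zero_one_of_isClosed
    (isClosed_compl_iff.2 hU) (isClosed_singleton (x := θ s))
    (by rw [Set.disjoint_left]; rintro a ha rfl; exact ha hs)
  refine ⟨(fun t => f (θ t)) ⁻¹' Set.Ioi (1/2 : ℝ), ?_, (key f).isOpen_preimage _ isOpen_Ioi, ?_⟩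
  · intro t ht
    simp only [Set.mem_preimage, Set.mem_Ioi] at ht
    by_contra hmem
    have : f (θ t) = 0 := hf0 hmem
    rw [this] at ht; norm_num at ht
  · simp only [Set.mem_preimage, Set.mem_Ioi]
    have : f (θ s) = 1 := hf1 rfl
    rw [this]; norm_num

end HilbertFn
end
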